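/- (Rockafellar's surjectivity theorem.) Let E be a reflexive real Banach space and M a maximally monotone subset of B = E × E*. Then for every x* ∈ E* there exist x ∈ E and s*, j* ∈ E* such that (x, s*) ∈ M, ½‖x‖² + ½‖j*‖² = j*(x) (i.e. j* belongs to the duality map at x), and s* + j* = x*. -/

import Mathlib

open NormedSpace

noncomputable section

variable (E : Type*) [NormedAddCommGroup E] [NormedSpace ℝ E]

/-- `B = E × E*`. -/
abbrev BSp := E × StrongDual ℝ E

/-- `B* = E* × E**`. -/
abbrev BStar := StrongDual ℝ E × StrongDual ℝ (StrongDual ℝ E)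

/-- `q(x, x*) = ⟨x, x*⟩`. -/
def qB (b : BSp E) : ℝ := b.2 b.1

/-- `r(b) = ½‖b‖² + q(b)`, where `‖(x,x*)‖² = ‖x‖² + ‖x*‖²`. -/
def rB (b : BSp E) : ℝ := (‖b.1‖ ^ 2 + ‖b.2‖ ^ 2) / 2 + qB E b

/-- `q̃(y*, y**) = ⟨y*, y**⟩`. -/
def qS (p : BStar E) : ℝ := p.2 p.1

/-- `r̃(b*) = ½‖b*‖² + q̃(b*)`. -/
def rS (p : BStar E) : ℝ := (‖p.1‖ ^ 2 + ‖p.2‖ ^ 2) / 2 + qS E p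

/-- The isometry `L(y, y*) = (y*, ŷ)`. -/
def LMap (b : BSp E) : BStar E := (b.2, inclusionInDoubleDual ℝ E b.1)

/-- A subset of `B` is monotone. -/
def IsMonot (A : Set (BSp E)) : Prop := ∀ d ∈ A, ∀ e ∈ A, 0 ≤ qB E (d - e)

/-- A subset of `B` is maximally monotone. -/
def IsMaxMonot (A : Set (BSp E)) : Prop :=
  IsMonot E A ∧ ∀ A' : Set (BSp E), IsMonot E A' → A ⊆ A' → A' = A

/-- A subset of `B*` is monotone. -/
def IsMonotStar (N : Set (BStar E)) : Prop := ∀ d ∈ N, ∀ e ∈ N, 0 ≤ qS E (d - e)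

/-- A subset of `B*` is maximally monotone. -/
def IsMaxMonotStar (N : Set (BStar E)) : Prop :=
  IsMonotStar E N ∧ ∀ N' : Set (BStar E), IsMonotStar E N' → N ⊆ N' → N' = N

/-- `A` is quasidense: `inf_{a ∈ A} r(a - b) = 0` for every `b ∈ B`. -/
def Quasidense (A : Set (BSp E)) : Prop :=
  ∀ b : BSp E, (⨅ a ∈ A, (rB E (a - b) : EReal)) = 0

/-- `P_M(b) = −inf_{m ∈ M} q(m − b)`, an extended real. -/
def PFn (M : Set (BSp E)) (b : BSp E) : EReal := -(⨅ m ∈ M, (qB E (m - b) : EReal))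

/-- `F_M(b*) = −inf_{b ∈ B} [P_M(b) + q̃(b* − Lb)]`. -/
def FFn (M : Set (BSp E)) (p : BStar E) : EReal :=
  -(⨅ b : BSp E, (PFn E M b + (qS E (p - LMap E b) : EReal)))

/-- `G_M(b*) = −inf_{m ∈ M} q̃(Lm − b*)`. -/
def GFn (M : Set (BSp E)) (p : BStar E) : EReal :=
  -(⨅ m ∈ M, (qS E (LMap E m - p) : EReal))

/-- The Gossez extension `M^♯ = {b* : G_M(b*) ≤ 0}`. -/
def Sharp (M : Set (BSp E)) : Set (BStar E) := {p | GFn E M p ≤ 0}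

/-- `M` is of type (NI): `G_M ≥ 0` on `B*`. -/
def TypeNI (M : Set (BSp E)) : Prop := ∀ p : BStar E, 0 ≤ GFn E M p

variable [CompleteSpace E] [Nontrivial E]

open Topology Filter

lemma qB_sub (d e : BSp E) :
    qB E (d - e) = d.2 d.1 - d.2 e.1 - e.2 d.1 + e.2 e.1 := by
  simp [qB, ContinuousLinearMap.sub_apply, map_sub]; ring
lemma qB_neg (b : BSp E) : qB E (-b) = qB E b := by simp [qB]
lemma qB_abs_le (b : BSp E) : |qB E b| ≤ ‖b.2‖ * ‖b.1‖ := by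
  have := b.2.le_opNorm b.1
  simpa [qB, Real.norm_eq_abs] using this
lemma exists_near_norm (w : StrongDual ℝ E) {δ : ℝ} (hδ : 0 < δ) :
    ∃ x : E, ‖x‖ ≤ 1 ∧ ‖w‖ - δ ≤ w x := by
  by_contra h
  push_neg at h
  have hpos : 0 < ‖w‖ - δ := by
    have := h 0 (by simp)
    simpa using this
  have hb : ∀ x : E, ‖w x‖ ≤ (‖w‖ - δ) * ‖x‖ := by
    intro x
    rcases eq_or_ne x 0 with rfl | hx
    · simp
    · have hxn : 0 < ‖x‖ := norm_pos_iff.mpr hx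
      have hu1 : ‖(‖x‖⁻¹ • x)‖ ≤ 1 := by
        rw [norm_smul, Real.norm_eq_abs, abs_of_nonneg (by positivity)]
        rw [inv_mul_cancel₀ hxn.ne']
      have h1 := h _ hu1
      have h2 := h (-(‖x‖⁻¹ • x)) (by simpa using hu1)
      rw [map_neg] at h2
      have habs : |w (‖x‖⁻¹ • x)| ≤ ‖w‖ - δ := abs_le.mpr ⟨by linarith, h1.le⟩
      have hxeq : w x = ‖x‖ * w (‖x‖⁻¹ • x) := by
        rw [← smul_eq_mul, ← map_smul, smul_inv_smul₀ hxn.ne']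
      rw [Real.norm_eq_abs, hxeq, abs_mul, abs_of_nonneg hxn.le, mul_comm (‖w‖ - δ)]
      exact mul_le_mul_of_nonneg_left habs hxn.le
  have := w.opNorm_le_bound (by linarith) hb
  linarith
lemma sq_combo_norm {V : Type*} [NormedAddCommGroup V] [NormedSpace ℝ V]
    (x y : V) {a b : ℝ} (ha : 0 ≤ a) (hb : 0 ≤ b) (hab : a + b = 1) :
    ‖a • x + b • y‖ ^ 2 ≤ a * ‖x‖ ^ 2 + b * ‖y‖ ^ 2 := by
  have h1 : ‖a • x + b • y‖ ≤ a * ‖x‖ + b * ‖y‖ := by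
    calc ‖a • x + b • y‖ ≤ ‖a • x‖ + ‖b • y‖ := norm_add_le _ _
    _ = a * ‖x‖ + b * ‖y‖ := by
        rw [norm_smul, norm_smul, Real.norm_eq_abs, Real.norm_eq_abs,
          abs_of_nonneg ha, abs_of_nonneg hb]
  have h2 : ‖a • x + b • y‖ ^ 2 ≤ (a * ‖x‖ + b * ‖y‖) ^ 2 :=
    pow_le_pow_left₀ (norm_nonneg _) h1 2
  nlinarith [sq_nonneg (‖x‖ - ‖y‖), mul_nonneg ha hb]

lemma maxMonot_nonempty (N : Set (BSp E)) (hN : IsMaxMonot E N) : N.Nonempty := by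
  by_contra h
  rw [Set.not_nonempty_iff_eq_empty] at h
  have h0 : IsMonot E {(0 : BSp E)} := by
    intro d hd e he
    simp only [Set.mem_singleton_iff] at hd he
    subst hd; subst he
    simp [qB]
  have := hN.2 {0} h0 (by simp [h])
  rw [h] at this
  exact absurd this (by simp)

set_option maxHeartbeats 3200000 in
lemma key1 (hrefl : Function.Surjective (inclusionInDoubleDual ℝ E))
    (N : Set (BSp E)) (hN : IsMaxMonot E N) {ε : ℝ} (hε : 0 < ε) :
    ∃ b : BSp E, ∀ m ∈ N,
      m.2 b.1 + b.2 m.1 - qB E m + (‖b.1‖ ^ 2 + ‖b.2‖ ^ 2) / 2 ≤ ε := by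
  obtain ⟨m₀, hm₀⟩ := maxMonot_nonempty E N hN
  by_contra hcon
  push_neg at hcon
  set g : BSp E → ℝ := fun b => (‖b.1‖ ^ 2 + ‖b.2‖ ^ 2) / 2 with hgdef
  set C : Set (BSp E × ℝ) := {p | ∀ m ∈ N, m.2 p.1.1 + p.1.2 m.1 - qB E m ≤ p.2} with hCdef
  set U : Set (BSp E × ℝ) := {p | p.2 + g p.1 < ε} with hUdef
  -- (m, qB m) ∈ C for m ∈ N
  have hqC : ∀ m ∈ N, ((m, qB E m) : BSp E × ℝ) ∈ C := by
    intro m hm m' hm'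
    have h0 := hN.1 m' hm' m hm
    rw [qB_sub] at h0
    simp only [hCdef, Set.mem_setOf_eq, qB]
    linarith
  have hCconv : Convex ℝ C := by
    intro p hp q hq a b ha hb hab
    intro m hm
    have h1 := hp m hm
    have h2 := hq m hm
    simp only [Prod.fst_add, Prod.snd_add, Prod.smul_fst, Prod.smul_snd, map_add, map_smul,
      ContinuousLinearMap.add_apply, ContinuousLinearMap.coe_smul', Pi.smul_apply,
      smul_eq_mul] at *
    have hqm : a * qB E m + b * qB E m = qB E m := by rw [← add_mul, hab, one_mul]
    nlinarith [mul_le_mul_of_nonneg_left h1 ha, mul_le_mul_of_nonneg_left h2 hb]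
  have hUconv : Convex ℝ U := by
    intro p hp q hq a b ha hb hab
    simp only [hUdef, Set.mem_setOf_eq] at hp hq ⊢
    have e1 : (a • p + b • q).2 = a * p.2 + b * q.2 := rfl
    have e2 : g ((a • p + b • q).1) ≤ a * g p.1 + b * g q.1 := by
      have hx := sq_combo_norm (p.1.1) (q.1.1) ha hb hab
      have hy := sq_combo_norm (p.1.2) (q.1.2) ha hb hab
      simp only [hgdef]
      have : (a • p + b • q).1.1 = a • p.1.1 + b • q.1.1 := rfl
      rw [this]
      have : (a • p + b • q).1.2 = a • p.1.2 + b • q.1.2 := rfl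
      rw [this]
      nlinarith
    have hfin : a * (p.2 + g p.1) + b * (q.2 + g q.1) < ε := by
      have hor : 0 < a ∨ 0 < b := by
        by_contra h
        push_neg at h
        obtain ⟨h1, h2⟩ := h
        linarith [le_antisymm h1 ha, le_antisymm h2 hb]
      rcases hor with hpos | hpos
      · nlinarith [mul_lt_mul_of_pos_left hp hpos, mul_le_mul_of_nonneg_left hq.le hb]
      · nlinarith [mul_le_mul_of_nonneg_left hp.le ha, mul_lt_mul_of_pos_left hq hpos]
    rw [e1]
    linarith
  have hUopen : IsOpen U := by
    have : U = (fun p : BSp E × ℝ =>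
        p.2 + (‖p.1.1‖ ^ 2 + ‖p.1.2‖ ^ 2) / 2) ⁻¹' Set.Iio ε := rfl
    rw [this]
    apply IsOpen.preimage _ isOpen_Iio
    exact continuous_snd.add
      ((((continuous_norm.comp (continuous_fst.comp continuous_fst)).pow 2).add
        ((continuous_norm.comp (continuous_snd.comp continuous_fst)).pow 2)).div_const 2)
  have hdisj : Disjoint U C := by
    rw [Set.disjoint_left]
    intro p hpU hpC
    obtain ⟨m, hm, hgt⟩ := hcon p.1
    have h1 := hpC m hm
    simp only [hUdef, Set.mem_setOf_eq] at hpU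
    simp only [hgdef] at hpU hgt
    linarith
  obtain ⟨f, u, hfU, hfC⟩ := geometric_hahn_banach_open hUconv hUopen hCconv hdisj
  -- decompose f into opaque components
  obtain ⟨w₁, w₂, c, hfdec⟩ : ∃ (w₁ : StrongDual ℝ E) (w₂ : StrongDual ℝ (StrongDual ℝ E)) (c : ℝ),
      ∀ (b : BSp E) (t : ℝ), f (b, t) = w₁ b.1 + w₂ b.2 + t * c := by
    refine ⟨f.comp ((ContinuousLinearMap.inl ℝ (BSp E) ℝ).comp
        (ContinuousLinearMap.inl ℝ E (StrongDual ℝ E))),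
      f.comp ((ContinuousLinearMap.inl ℝ (BSp E) ℝ).comp
        (ContinuousLinearMap.inr ℝ E (StrongDual ℝ E))),
      f (((0 : E), (0 : StrongDual ℝ E)), (1 : ℝ)), ?_⟩
    intro b t
    have hsplit : ((b, t) : BSp E × ℝ)
        = (((b.1, (0 : StrongDual ℝ E)), (0 : ℝ)) : BSp E × ℝ)
          + ((((0 : E), b.2), (0 : ℝ)) : BSp E × ℝ)
          + t • ((((0 : E), (0 : StrongDual ℝ E)), (1 : ℝ)) : BSp E × ℝ) := by
      simp [Prod.ext_iff]
    rw [hsplit, map_add, map_add, map_smul]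
    simp only [ContinuousLinearMap.comp_apply,
      ContinuousLinearMap.inl_apply, ContinuousLinearMap.inr_apply, smul_eq_mul]
  -- c ≥ 0
  have hc0 : 0 ≤ c := by
    by_contra h
    push_neg at h
    have hmem : ∀ n : ℕ, ((m₀, qB E m₀ + n) : BSp E × ℝ) ∈ C := by
      intro n m hm
      have h0 := hqC m₀ hm₀ m hm
      have hn : (0 : ℝ) ≤ n := Nat.cast_nonneg n
      simp only [hCdef, Set.mem_setOf_eq] at h0 ⊢
      linarith
    obtain ⟨n, hn⟩ := exists_nat_gt ((w₁ m₀.1 + w₂ m₀.2 + qB E m₀ * c - u) / (-c))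
    have hle := hfC _ (hmem n)
    rw [hfdec, add_mul] at hle
    have hnc : (w₁ m₀.1 + w₂ m₀.2 + qB E m₀ * c - u) < n * (-c) :=
      (div_lt_iff₀ (by linarith)).mp hn
    have hnc' : (n : ℝ) * (-c) = -(n * c) := by ring
    rw [hnc'] at hnc
    linarith
  -- c ≠ 0
  have hcne : c ≠ 0 := by
    intro h0c
    have hwlt : ∀ b : BSp E, w₁ b.1 + w₂ b.2 < u := by
      intro b
      have hmem : ((b, ε - g b - 1) : BSp E × ℝ) ∈ U := by
        simp only [hUdef, Set.mem_setOf_eq]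
        linarith
      have := hfU _ hmem
      rw [hfdec, h0c, mul_zero, add_zero] at this
      exact this
    have hw0 : ∀ b : BSp E, w₁ b.1 + w₂ b.2 = 0 := by
      intro b
      by_contra hne
      have hscale : ∀ r : ℝ, r * (w₁ b.1 + w₂ b.2) < u := by
        intro r
        have := hwlt (r • b)
        have e1 : (r • b).1 = r • b.1 := rfl
        have e2 : (r • b).2 = r • b.2 := rfl
        rw [e1, e2, map_smul, map_smul, smul_eq_mul, smul_eq_mul] at this
        linarith
      have := hscale ((u + 1) / (w₁ b.1 + w₂ b.2))
      rw [div_mul_cancel₀ _ hne] at this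
      linarith
    have h1 : u ≤ 0 := by
      have := hfC _ (hqC m₀ hm₀)
      rw [hfdec, h0c, mul_zero, add_zero, hw0] at this
      linarith
    have h2 : 0 < u := by
      have hmem : ((((0 : E), (0 : StrongDual ℝ E)), ε / 2) : BSp E × ℝ) ∈ U := by
        simp only [hUdef, Set.mem_setOf_eq, hgdef]
        simp
        linarith
      have := hfU _ hmem
      rw [hfdec, h0c, mul_zero, add_zero] at this
      have hz := hw0 (((0 : E), (0 : StrongDual ℝ E)) : BSp E)
      linarith
    linarith
  have hcpos : 0 < c := lt_of_le_of_ne hc0 (Ne.symm hcne)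
  -- normalized data
  obtain ⟨w₁', w₂', σ, hIm, hIb⟩ :
      ∃ (w₁' : StrongDual ℝ E) (w₂' : StrongDual ℝ (StrongDual ℝ E)) (σ : ℝ),
        (∀ m ∈ N, σ ≤ w₁' m.1 + w₂' m.2 + qB E m) ∧
        (∀ b : BSp E, w₁' b.1 + w₂' b.2 + ε - g b ≤ σ) := by
    refine ⟨c⁻¹ • w₁, c⁻¹ • w₂, u / c, ?_, ?_⟩
    · intro m hm
      have h1 := hfC _ (hqC m hm)
      rw [hfdec] at h1
      have e1 : (c⁻¹ • w₁) m.1 = c⁻¹ * w₁ m.1 := rfl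
      have e2 : (c⁻¹ • w₂) m.2 = c⁻¹ * w₂ m.2 := rfl
      rw [e1, e2, div_le_iff₀ hcpos]
      have hexp : (c⁻¹ * w₁ m.1 + c⁻¹ * w₂ m.2 + qB E m) * c
          = w₁ m.1 + w₂ m.2 + qB E m * c := by
        field_simp
      rw [hexp]
      exact h1
    · intro b
      have hUt : ∀ δ : ℝ, 0 < δ → w₁ b.1 + w₂ b.2 + (ε - g b - δ) * c < u := by
        intro δ hδ
        have hmem : ((b, ε - g b - δ) : BSp E × ℝ) ∈ U := by
          simp only [hUdef, Set.mem_setOf_eq]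
          linarith
        have := hfU _ hmem
        rwa [hfdec] at this
      have h3 : w₁ b.1 + w₂ b.2 + (ε - g b) * c ≤ u := by
        by_contra h
        push_neg at h
        have hδ : 0 < (w₁ b.1 + w₂ b.2 + (ε - g b) * c - u) / c :=
          div_pos (by linarith) hcpos
        have h4 := hUt _ hδ
        have h5 : (w₁ b.1 + w₂ b.2 + (ε - g b) * c - u) / c * c
            = w₁ b.1 + w₂ b.2 + (ε - g b) * c - u :=
          div_mul_cancel₀ _ hcne
        have h6 : (ε - g b - (w₁ b.1 + w₂ b.2 + (ε - g b) * c - u) / c) * c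
            = (ε - g b) * c - ((w₁ b.1 + w₂ b.2 + (ε - g b) * c - u) / c) * c := by
          ring
        rw [h6, h5] at h4
        linarith
      have e1 : (c⁻¹ • w₁) b.1 = c⁻¹ * w₁ b.1 := rfl
      have e2 : (c⁻¹ • w₂) b.2 = c⁻¹ * w₂ b.2 := rfl
      rw [e1, e2, le_div_iff₀ hcpos]
      have hexp : (c⁻¹ * w₁ b.1 + c⁻¹ * w₂ b.2 + ε - g b) * c
          = w₁ b.1 + w₂ b.2 + (ε - g b) * c := by
        field_simp
        ring
      rw [hexp]
      exact h3
  clear hfdec hfU hfC hc0 hcne hcpos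
  -- reflexivity: w₂' = ŷ
  obtain ⟨y, hy⟩ := hrefl w₂'
  have hyap : ∀ xs : StrongDual ℝ E, w₂' xs = xs y := by
    intro xs
    rw [← hy]
    exact dual_def ℝ E y xs
  -- key norm bound
  obtain ⟨fy, hfy1, hfy2⟩ : ∃ fy : StrongDual ℝ E, ‖fy‖ ≤ 1 ∧ fy y = ‖y‖ := by
    rcases eq_or_ne y 0 with rfl | hy0
    · exact ⟨0, by simp, by simp⟩
    · obtain ⟨fy, h1, h2⟩ := exists_dual_vector ℝ y (norm_ne_zero_iff.mpr hy0)
      exact ⟨fy, le_of_eq h1, by exact_mod_cast h2⟩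
  have hδstep : ∀ δ : ℝ, 0 < δ →
      (‖w₁'‖ ^ 2 + ‖y‖ ^ 2) / 2 + ε - δ * ‖w₁'‖ ≤ σ := by
    intro δ hδ
    obtain ⟨x, hx1, hx2⟩ := exists_near_norm E w₁' hδ
    have hb := hIb (‖w₁'‖ • x, ‖y‖ • fy)
    have e1 : ((‖w₁'‖ • x, ‖y‖ • fy) : BSp E).1 = ‖w₁'‖ • x := rfl
    have e2 : ((‖w₁'‖ • x, ‖y‖ • fy) : BSp E).2 = ‖y‖ • fy := rfl
    rw [e1, e2] at hb
    have e3 : w₁' (‖w₁'‖ • x) = ‖w₁'‖ * w₁' x := by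
      rw [map_smul, smul_eq_mul]
    have e4 : w₂' (‖y‖ • fy) = ‖y‖ ^ 2 := by
      rw [hyap, ContinuousLinearMap.smul_apply, hfy2, smul_eq_mul]
      ring
    have n1 : ‖(‖w₁'‖ • x)‖ ≤ ‖w₁'‖ := by
      rw [norm_smul, Real.norm_eq_abs, abs_of_nonneg (norm_nonneg _)]
      nlinarith [norm_nonneg w₁', norm_nonneg x]
    have n2 : ‖(‖y‖ • fy)‖ ≤ ‖y‖ := by
      rw [norm_smul, Real.norm_eq_abs, abs_of_nonneg (norm_nonneg _)]
      nlinarith [norm_nonneg y, norm_nonneg fy]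
    have s1 : ‖(‖w₁'‖ • x)‖ ^ 2 ≤ ‖w₁'‖ ^ 2 :=
      pow_le_pow_left₀ (norm_nonneg _) n1 2
    have s2 : ‖(‖y‖ • fy)‖ ^ 2 ≤ ‖y‖ ^ 2 :=
      pow_le_pow_left₀ (norm_nonneg _) n2 2
    have e5 : g ((‖w₁'‖ • x, ‖y‖ • fy) : BSp E)
        = (‖(‖w₁'‖ • x)‖ ^ 2 + ‖(‖y‖ • fy)‖ ^ 2) / 2 := rfl
    rw [e3, e4, e5] at hb
    have hw1l : ‖w₁'‖ ^ 2 - δ * ‖w₁'‖ ≤ ‖w₁'‖ * w₁' x := by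
      have := mul_le_mul_of_nonneg_left hx2 (norm_nonneg w₁')
      nlinarith
    linarith
  have hKσ : (‖w₁'‖ ^ 2 + ‖y‖ ^ 2) / 2 + ε ≤ σ := by
    by_contra h
    push_neg at h
    have hδ : 0 < ((‖w₁'‖ ^ 2 + ‖y‖ ^ 2) / 2 + ε - σ) / (‖w₁'‖ + 1) :=
      div_pos (by linarith) (by positivity)
    have h1 := hδstep _ hδ
    have h2 : ((‖w₁'‖ ^ 2 + ‖y‖ ^ 2) / 2 + ε - σ) / (‖w₁'‖ + 1) * ‖w₁'‖
        < (‖w₁'‖ ^ 2 + ‖y‖ ^ 2) / 2 + ε - σ := by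
      rw [div_mul_eq_mul_div, div_lt_iff₀ (by positivity)]
      nlinarith [norm_nonneg w₁']
    linarith
  -- contradiction point
  have hmono : ∀ m ∈ N, ε ≤ qB E (m - ((-y, -w₁') : BSp E)) := by
    intro m hm
    have h1 := hIm m hm
    have hq : qB E (m - ((-y, -w₁') : BSp E))
        = qB E m + m.2 y + w₁' m.1 + w₁' y := by
      rw [qB_sub]
      have p1 : ((-y, -w₁') : BSp E).1 = -y := rfl
      have p2 : ((-y, -w₁') : BSp E).2 = -w₁' := rfl
      rw [p1, p2]
      simp only [qB, map_neg, ContinuousLinearMap.neg_apply, map_neg]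
      ring
    have hw2 : w₂' m.2 = m.2 y := hyap m.2
    have hbd : -(‖w₁'‖ * ‖y‖) ≤ w₁' y := by
      have h2 := w₁'.le_opNorm y
      rw [Real.norm_eq_abs] at h2
      linarith [neg_abs_le (w₁' y)]
    nlinarith [sq_nonneg (‖w₁'‖ - ‖y‖)]
  have hmon2 : IsMonot E (insert ((-y, -w₁') : BSp E) N) := by
    intro a ha b hb
    rw [Set.mem_insert_iff] at ha hb
    rcases ha with rfl | ha
    · rcases hb with rfl | hb
      · simp [qB]
      · rw [show ((-y, -w₁') : BSp E) - b = -(b - ((-y, -w₁') : BSp E)) from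
          (neg_sub _ _).symm, qB_neg]
        linarith [hmono b hb]
    · rcases hb with rfl | hb
      · linarith [hmono a ha]
      · exact hN.1 a ha b hb
  have heq := hN.2 _ hmon2 (Set.subset_insert _ _)
  have hdN : ((-y, -w₁') : BSp E) ∈ N := heq ▸ Set.mem_insert _ N
  have hfin := hmono _ hdN
  rw [sub_self] at hfin
  have hz : qB E (0 : BSp E) = 0 := by simp [qB]
  linarith

set_option maxHeartbeats 1600000 in
lemma main_lemma (hrefl : Function.Surjective (inclusionInDoubleDual ℝ E))
    (N : Set (BSp E)) (hN : IsMaxMonot E N) :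
    ∃ b ∈ N, qB E b + (‖b.1‖ ^ 2 + ‖b.2‖ ^ 2) / 2 ≤ 0 := by
  obtain ⟨m₀, hm₀⟩ := maxMonot_nonempty E N hN
  have hkey : ∀ n : ℕ, ∃ b : BSp E, ∀ m ∈ N,
      m.2 b.1 + b.2 m.1 - qB E m + (‖b.1‖ ^ 2 + ‖b.2‖ ^ 2) / 2 ≤ 1 / (n + 1) :=
    fun n => key1 E hrefl N hN (by positivity)
  choose b hb using hkey
  set C0 : ℝ := 1 + |qB E m₀| + ‖m₀.1‖ + ‖m₀.2‖ with hC0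
  have hC0one : 1 ≤ C0 := by
    have := abs_nonneg (qB E m₀)
    have := norm_nonneg m₀.1
    have := norm_nonneg m₀.2
    linarith
  have hbound : ∀ n : ℕ, ‖(b n).1‖ ≤ 3 * C0 ∧ ‖(b n).2‖ ≤ 3 * C0 := by
    intro n
    have h1 := hb n m₀ hm₀
    have h1n : (1 : ℝ) / (n + 1) ≤ 1 := by
      rw [div_le_one (by positivity)]
      linarith [Nat.cast_nonneg (α := ℝ) n]
    have e1 : -(‖m₀.2‖ * ‖(b n).1‖) ≤ m₀.2 (b n).1 := by
      have h := m₀.2.le_opNorm (b n).1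
      rw [Real.norm_eq_abs] at h
      linarith [neg_abs_le (m₀.2 (b n).1)]
    have e2 : -(‖(b n).2‖ * ‖m₀.1‖) ≤ (b n).2 m₀.1 := by
      have h := ((b n).2).le_opNorm m₀.1
      rw [Real.norm_eq_abs] at h
      linarith [neg_abs_le ((b n).2 m₀.1)]
    have e3 : qB E m₀ ≤ |qB E m₀| := le_abs_self _
    have h2 : ‖(b n).1‖ ^ 2 + ‖(b n).2‖ ^ 2
        ≤ 2 * C0 + 2 * C0 * ‖(b n).1‖ + 2 * C0 * ‖(b n).2‖ := by
      nlinarith [norm_nonneg (b n).1, norm_nonneg (b n).2, norm_nonneg m₀.1,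
        norm_nonneg m₀.2, abs_nonneg (qB E m₀)]
    constructor
    · nlinarith [sq_nonneg (‖(b n).2‖ - C0), norm_nonneg (b n).1, sq_nonneg C0]
    · nlinarith [sq_nonneg (‖(b n).1‖ - C0), norm_nonneg (b n).2, sq_nonneg C0]
  set R : ℝ := 3 * C0 with hR
  -- ultrafilter setup
  set 𝒰 : Ultrafilter ℕ := Ultrafilter.of Filter.atTop with h𝒰def
  have h𝒰 : (𝒰 : Filter ℕ) ≤ Filter.atTop := Ultrafilter.of_le _
  -- weak-* limit of the double-dual embeddings of (b n).1
  set F : ℕ → WeakDual ℝ (StrongDual ℝ E) :=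
    fun n => StrongDual.toWeakDual (inclusionInDoubleDual ℝ E ((b n).1)) with hF
  have hFmem : ∀ n, F n ∈ WeakDual.toStrongDual ⁻¹' Metric.closedBall 0 R := by
    intro n
    simp only [Set.mem_preimage, Metric.mem_closedBall, dist_zero_right]
    calc dist (WeakDual.toStrongDual (F n)) 0 = ‖WeakDual.toStrongDual (F n)‖ := dist_zero_right (WeakDual.toStrongDual (F n))
    _ = ‖inclusionInDoubleDual ℝ E ((b n).1)‖ := rfl
    _ ≤ ‖(b n).1‖ := double_dual_bound ℝ E _
    _ ≤ R := (hbound n).1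
  have hKcpt : IsCompact (WeakDual.toStrongDual ⁻¹' Metric.closedBall (0 : StrongDual ℝ (StrongDual ℝ E)) R) :=
    WeakDual.isCompact_closedBall 0 R
  obtain ⟨χ, hχmem, hχle⟩ := hKcpt.ultrafilter_le_nhds (𝒰.map F)
    (by
      rw [Filter.le_principal_iff]
      exact Filter.mem_map.mpr (Filter.univ_mem' hFmem))
  have hχtends : ∀ fd : StrongDual ℝ E,
      Filter.Tendsto (fun n => fd ((b n).1)) 𝒰 (𝓝 (χ fd)) := by
    intro fd
    have ht : Filter.Tendsto F 𝒰 (𝓝 χ) := by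
      rw [Filter.Tendsto, ← Ultrafilter.coe_map]
      exact hχle
    have h2 := tendsto_iff_forall_eval_tendsto_topDualPairing.mp ht fd
    exact h2
  obtain ⟨x, hx⟩ := hrefl (WeakDual.toStrongDual χ)
  have hxev : ∀ fd : StrongDual ℝ E, χ fd = fd x := by
    intro fd
    have : χ fd = (WeakDual.toStrongDual χ) fd := rfl
    rw [this, ← hx]
    exact dual_def ℝ E x fd
  -- weak-* limit of (b n).2
  set G : ℕ → WeakDual ℝ E := fun n => StrongDual.toWeakDual ((b n).2) with hG
  have hGmem : ∀ n, G n ∈ WeakDual.toStrongDual ⁻¹' Metric.closedBall 0 R := by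
    intro n
    simp only [Set.mem_preimage, Metric.mem_closedBall, dist_zero_right]
    calc ‖WeakDual.toStrongDual (G n)‖ = ‖(b n).2‖ := rfl
    _ ≤ R := (hbound n).2
  have hGcpt : IsCompact (WeakDual.toStrongDual ⁻¹' Metric.closedBall (0 : StrongDual ℝ E) R) :=
    WeakDual.isCompact_closedBall 0 R
  obtain ⟨ψ, hψmem, hψle⟩ := hGcpt.ultrafilter_le_nhds (𝒰.map G)
    (by
      rw [Filter.le_principal_iff]
      exact Filter.mem_map.mpr (Filter.univ_mem' hGmem))
  set xbar : StrongDual ℝ E := WeakDual.toStrongDual ψ with hxbar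
  have hψtends : ∀ z : E, Filter.Tendsto (fun n => (b n).2 z) 𝒰 (𝓝 (xbar z)) := by
    intro z
    have ht : Filter.Tendsto G 𝒰 (𝓝 ψ) := by
      rw [Filter.Tendsto, ← Ultrafilter.coe_map]
      exact hψle
    have h2 := tendsto_iff_forall_eval_tendsto_topDualPairing.mp ht z
    exact h2
  -- limits of norms
  obtain ⟨L₁, hL₁mem, hL₁le⟩ := (isCompact_Icc (a := (0:ℝ)) (b := R)).ultrafilter_le_nhds
    (𝒰.map fun n => ‖(b n).1‖)
    (by
      rw [Filter.le_principal_iff]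
      exact Filter.mem_map.mpr (Filter.univ_mem'
        fun n => Set.mem_Icc.mpr ⟨norm_nonneg _, (hbound n).1⟩))
  have hL₁ : Filter.Tendsto (fun n => ‖(b n).1‖) 𝒰 (𝓝 L₁) := by
    rw [Filter.Tendsto, ← Ultrafilter.coe_map]; exact hL₁le
  obtain ⟨L₂, hL₂mem, hL₂le⟩ := (isCompact_Icc (a := (0:ℝ)) (b := R)).ultrafilter_le_nhds
    (𝒰.map fun n => ‖(b n).2‖)
    (by
      rw [Filter.le_principal_iff]
      exact Filter.mem_map.mpr (Filter.univ_mem'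
        fun n => Set.mem_Icc.mpr ⟨norm_nonneg _, (hbound n).2⟩))
  have hL₂ : Filter.Tendsto (fun n => ‖(b n).2‖) 𝒰 (𝓝 L₂) := by
    rw [Filter.Tendsto, ← Ultrafilter.coe_map]; exact hL₂le
  have hL₁0 : 0 ≤ L₁ := hL₁mem.1
  have hL₂0 : 0 ≤ L₂ := hL₂mem.1
  -- norms of limits
  have hxL : ‖x‖ ≤ L₁ := by
    apply norm_le_dual_bound ℝ x hL₁0
    intro fd
    have ht1 : Filter.Tendsto (fun n => |fd ((b n).1)|) 𝒰 (𝓝 |fd x|) := by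
      have h := hχtends fd
      rw [hxev] at h
      exact h.abs
    have ht2 : Filter.Tendsto (fun n => ‖fd‖ * ‖(b n).1‖) 𝒰 (𝓝 (‖fd‖ * L₁)) :=
      hL₁.const_mul _
    have hle := le_of_tendsto_of_tendsto' ht1 ht2 (fun n => by
      have h := fd.le_opNorm (b n).1
      rwa [Real.norm_eq_abs] at h)
    rw [Real.norm_eq_abs]
    linarith [hle]
  have hxbarL : ‖xbar‖ ≤ L₂ := by
    apply ContinuousLinearMap.opNorm_le_bound _ hL₂0
    intro z
    have ht1 : Filter.Tendsto (fun n => |(b n).2 z|) 𝒰 (𝓝 |xbar z|) := (hψtends z).abs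
    have ht2 : Filter.Tendsto (fun n => ‖(b n).2‖ * ‖z‖) 𝒰 (𝓝 (L₂ * ‖z‖)) :=
      hL₂.mul_const _
    have hle := le_of_tendsto_of_tendsto' ht1 ht2 (fun n => by
      have h := ((b n).2).le_opNorm z
      rwa [Real.norm_eq_abs] at h)
    rwa [Real.norm_eq_abs]
  -- the limit inequality
  have hlim : ∀ m ∈ N, m.2 x + xbar m.1 - qB E m + (L₁ ^ 2 + L₂ ^ 2) / 2 ≤ 0 := by
    intro m hm
    have t1 : Filter.Tendsto (fun n => m.2 ((b n).1)) 𝒰 (𝓝 (m.2 x)) := by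
      have h := hχtends m.2
      rwa [hxev] at h
    have t2 := hψtends m.1
    have t3 : Filter.Tendsto (fun n => ‖(b n).1‖ ^ 2) 𝒰 (𝓝 (L₁ ^ 2)) := hL₁.pow 2
    have t4 : Filter.Tendsto (fun n => ‖(b n).2‖ ^ 2) 𝒰 (𝓝 (L₂ ^ 2)) := hL₂.pow 2
    have hseq : Filter.Tendsto
        (fun n => m.2 ((b n).1) + (b n).2 m.1 - qB E m
          + (‖(b n).1‖ ^ 2 + ‖(b n).2‖ ^ 2) / 2) 𝒰
        (𝓝 (m.2 x + xbar m.1 - qB E m + (L₁ ^ 2 + L₂ ^ 2) / 2)) :=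
      (((t1.add t2).sub tendsto_const_nhds).add ((t3.add t4).div_const 2))
    have hz : Filter.Tendsto (fun n : ℕ => 1 / ((n : ℝ) + 1)) 𝒰 (𝓝 0) :=
      tendsto_one_div_add_atTop_nhds_zero_nat.mono_left h𝒰
    exact le_of_tendsto_of_tendsto' hseq hz (fun n => hb n m hm)
  set bb : BSp E := (x, xbar) with hbb
  have hbb1 : bb.1 = x := rfl
  have hbb2 : bb.2 = xbar := rfl
  have hqbb : qB E bb = xbar x := rfl
  have hxxbar : -(‖xbar‖ * ‖x‖) ≤ xbar x := by
    have h := xbar.le_opNorm x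
    rw [Real.norm_eq_abs] at h
    linarith [neg_abs_le (xbar x)]
  have hsq1 : ‖x‖ ^ 2 ≤ L₁ ^ 2 := pow_le_pow_left₀ (norm_nonneg _) hxL 2
  have hsq2 : ‖xbar‖ ^ 2 ≤ L₂ ^ 2 := pow_le_pow_left₀ (norm_nonneg _) hxbarL 2
  have hrel : ∀ m ∈ N, 0 ≤ qB E (m - bb) := by
    intro m hm
    have h1 := hlim m hm
    have hq := qB_sub E m bb
    rw [hbb1, hbb2] at hq
    have : qB E m = m.2 m.1 := rfl
    nlinarith [sq_nonneg (‖x‖ - ‖xbar‖), norm_nonneg x, norm_nonneg xbar]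
  have hbbN : bb ∈ N := by
    have hmon2 : IsMonot E (insert bb N) := by
      intro d hd e he
      rw [Set.mem_insert_iff] at hd he
      rcases hd with rfl | hd
      · rcases he with rfl | he
        · rw [sub_self]
          simp [qB]
        · rw [show bb - e = -(e - bb) from (neg_sub _ _).symm, qB_neg]
          exact hrel e he
      · rcases he with rfl | he
        · exact hrel d hd
        · exact hN.1 d hd e he
    have heq := hN.2 _ hmon2 (Set.subset_insert _ _)
    exact heq ▸ Set.mem_insert _ N
  refine ⟨bb, hbbN, ?_⟩
  have h2 := hlim bb hbbN
  rw [hbb1, hbb2] at h2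
  have h3 : qB E bb = xbar x := rfl
  rw [hbb1, hbb2, h3]
  -- h2 : xbar x + xbar x - qB E bb + (L₁² + L₂²)/2 ≤ 0, qB bb = xbar x
  rw [h3] at h2
  nlinarith [sq_nonneg (‖x‖ - ‖xbar‖)]

/-- Rockafellar's surjectivity theorem: if `E` is reflexive and `M`
is maximally monotone then `R(S + J) = E*`. -/
theorem rockafellar_surjectivity
    (hrefl : Function.Surjective (inclusionInDoubleDual ℝ E))
    (M : Set (BSp E)) (hM : IsMaxMonot E M) (xstar : StrongDual ℝ E) :
    ∃ (x : E) (sstar jstar : StrongDual ℝ E), (x, sstar) ∈ M ∧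
      ‖x‖ ^ 2 / 2 + ‖jstar‖ ^ 2 / 2 = jstar x ∧ sstar + jstar = xstar := by
  set N : Set (BSp E) := {p | ((p.1, p.2 + xstar) : BSp E) ∈ M} with hNdef
  have hdiff : ∀ d e : BSp E,
      ((d.1, d.2 + xstar) : BSp E) - ((e.1, e.2 + xstar) : BSp E) = d - e := by
    intro d e
    apply Prod.ext
    · rfl
    · show d.2 + xstar - (e.2 + xstar) = d.2 - e.2
      abel
  have hdiff' : ∀ d e : BSp E,
      ((d.1, d.2 - xstar) : BSp E) - ((e.1, e.2 - xstar) : BSp E) = d - e := by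
    intro d e
    apply Prod.ext
    · rfl
    · show d.2 - xstar - (e.2 - xstar) = d.2 - e.2
      abel
  have hNmax : IsMaxMonot E N := by
    constructor
    · intro d hd e he
      have h := hM.1 _ hd _ he
      rwa [hdiff] at h
    · intro A' hA' hsub
      set A : Set (BSp E) := {p | ((p.1, p.2 - xstar) : BSp E) ∈ A'} with hAdef
      have hAmon : IsMonot E A := by
        intro d hd e he
        have h := hA' _ hd _ he
        rwa [hdiff'] at h
      have hMA : M ⊆ A := by
        intro m hm
        show ((m.1, m.2 - xstar) : BSp E) ∈ A'
        apply hsub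
        show ((m.1, m.2 - xstar + xstar) : BSp E) ∈ M
        rw [sub_add_cancel]
        exact hm
      have hAM := hM.2 A hAmon hMA
      ext p
      constructor
      · intro hp
        show ((p.1, p.2 + xstar) : BSp E) ∈ M
        rw [← hAM]
        show ((p.1, p.2 + xstar - xstar) : BSp E) ∈ A'
        rw [add_sub_cancel_right]
        exact hp
      · exact fun hp => hsub hp
  obtain ⟨bb, hbbN, hineq⟩ := main_lemma E hrefl N hNmax
  refine ⟨bb.1, bb.2 + xstar, -bb.2, hbbN, ?_, by abel⟩
  have habs : |qB E bb| ≤ ‖bb.2‖ * ‖bb.1‖ := by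
    have h := bb.2.le_opNorm bb.1
    rwa [Real.norm_eq_abs] at h
  have hq : qB E bb = bb.2 bb.1 := rfl
  have hneg : (-bb.2) bb.1 = -(bb.2 bb.1) := rfl
  rw [norm_neg, hneg]
  nlinarith [sq_nonneg (‖bb.1‖ - ‖bb.2‖), abs_le.mp habs]
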